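/- Fix an integer m ≥ 2. For every integer n ≥ 0, φ(n) = (-1)^n Σ_{r ≥ 0} (-1)^r Σ_{(a_1, …, a_r)} (m - a_1)(m - a_2)⋯(m - a_r), where the inner sum ranges over all r-tuples of integers (a_1, …, a_r) satisfying 1 ≤ a_i ≤ m-1 for each i and a_1 + ⋯ + a_r = n (for n = 0 the only contribution comes from the empty tuple with r = 0, whose product is 1; the outer sum is finite since nonzero terms require r ≤ n). -/

import Mathlib

/-- `phiNat m n` is the number of sequences `(i₁, …, iₙ)` with entries in `{1, …, m-1}`
(encoded as functions `Fin n → Fin m` with nonzero values) such that no entry is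
immediately followed by its successor. -/
noncomputable def phiNat (m n : ℕ) : ℕ :=
  Nat.card {f : Fin n → Fin m //
    (∀ k, 1 ≤ (f k : ℕ)) ∧
    ∀ (k : ℕ) (hk : k + 1 < n),
      (f ⟨k + 1, hk⟩ : ℕ) ≠ (f ⟨k, Nat.lt_of_succ_lt hk⟩ : ℕ) + 1}

/-- `phi m : ℤ → ℤ`, the rank function of the quadratic dual algebra `N_m(R)^!`,
vanishing on negative integers. -/
noncomputable def phi (m : ℕ) (n : ℤ) : ℤ :=
  if n < 0 then 0 else phiNat m n.toNat


open scoped Classical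

noncomputable def Bset (m n b : ℕ) : Finset (Fin n → Fin m) :=
  Finset.univ.filter fun f =>
    (∀ k, 1 ≤ (f k : ℕ)) ∧
    (∀ (k : ℕ) (hk : k + 1 < n), k < b →
      (f ⟨k + 1, hk⟩ : ℕ) = (f ⟨k, Nat.lt_of_succ_lt hk⟩ : ℕ) + 1) ∧
    (∀ (k : ℕ) (hk : k + 1 < n), b ≤ k →
      (f ⟨k + 1, hk⟩ : ℕ) ≠ (f ⟨k, Nat.lt_of_succ_lt hk⟩ : ℕ) + 1)

noncomputable def Qset (m n a : ℕ) : Finset (Fin n → Fin m) :=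
  Finset.univ.filter fun f =>
    (∀ k, 1 ≤ (f k : ℕ)) ∧
    (∀ (k : ℕ) (hk : k + 1 < n), k + 1 < a →
      (f ⟨k + 1, hk⟩ : ℕ) = (f ⟨k, Nat.lt_of_succ_lt hk⟩ : ℕ) + 1) ∧
    (∀ (k : ℕ) (hk : k + 1 < n), a ≤ k →
      (f ⟨k + 1, hk⟩ : ℕ) ≠ (f ⟨k, Nat.lt_of_succ_lt hk⟩ : ℕ) + 1)

lemma phiNat_eq (m n : ℕ) : phiNat m n = (Bset m n 0).card := by
  rw [phiNat, Nat.card_eq_fintype_card, Fintype.card_subtype, Bset]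
  congr 1
  ext f
  simp [Nat.not_lt_zero, Nat.zero_le]

lemma Bset_last (m n : ℕ) : Bset m n (n - 1) = Qset m n n := by
  unfold Bset Qset
  apply Finset.filter_congr
  intro f _
  constructor
  · rintro ⟨h1, h2, h3⟩
    exact ⟨h1, fun k hk hk' => h2 k hk (by omega), fun k hk hk' => absurd hk (by omega)⟩
  · rintro ⟨h1, h2, h3⟩
    exact ⟨h1, fun k hk hk' => h2 k hk (by omega), fun k hk hk' => absurd hk (by omega)⟩

lemma Qset_split (m n j : ℕ) (hj : j + 1 < n) :
    (Qset m n (j + 1)).card = (Bset m n j).card + (Bset m n (j + 1)).card := by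
  classical
  have hB1 : Bset m n j = (Qset m n (j + 1)).filter
      (fun f => ¬ (f ⟨j + 1, hj⟩ : ℕ) = (f ⟨j, Nat.lt_of_succ_lt hj⟩ : ℕ) + 1) := by
    unfold Bset Qset
    rw [Finset.filter_filter]
    apply Finset.filter_congr
    intro f _
    constructor
    · rintro ⟨h1, h2, h3⟩
      exact ⟨⟨h1, fun k hk hk' => h2 k hk (by omega), fun k hk hk' => h3 k hk (by omega)⟩,
        h3 j hj le_rfl⟩
    · rintro ⟨⟨h1, h2, h3⟩, h4⟩
      refine ⟨h1, fun k hk hk' => h2 k hk (by omega), fun k hk hk' => ?_⟩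
      rcases eq_or_lt_of_le hk' with h | h
      · subst h; exact h4
      · exact h3 k hk h
  have hB2 : Bset m n (j + 1) = (Qset m n (j + 1)).filter
      (fun f : Fin n → Fin m => (f ⟨j + 1, hj⟩ : ℕ) = (f ⟨j, Nat.lt_of_succ_lt hj⟩ : ℕ) + 1) := by
    unfold Bset Qset
    rw [Finset.filter_filter]
    apply Finset.filter_congr
    intro f _
    constructor
    · rintro ⟨h1, h2, h3⟩
      exact ⟨⟨h1, fun k hk hk' => h2 k hk (by omega), fun k hk hk' => h3 k hk hk'⟩,
        h2 j hj (by omega)⟩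
    · rintro ⟨⟨h1, h2, h3⟩, h4⟩
      refine ⟨h1, fun k hk hk' => ?_, fun k hk hk' => h3 k hk hk'⟩
      rcases eq_or_lt_of_le (Nat.lt_succ_iff.mp hk') with h | h
      · subst h
        exact h4
      · exact h2 k hk (by omega)
  rw [hB1, hB2]
  exact ((Nat.add_comm _ _).trans (Finset.card_filter_add_card_filter_not
    (s := Qset m n (j + 1))
    (fun f : Fin n → Fin m => (f ⟨j + 1, hj⟩ : ℕ) = (f ⟨j, Nat.lt_of_succ_lt hj⟩ : ℕ) + 1))).symm

lemma Bset_tele (m n : ℕ) : ∀ (d j : ℕ), j + d + 1 = n →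
    ((Bset m n j).card : ℤ) =
      ∑ a ∈ Finset.Icc (j + 1) n, (-1 : ℤ) ^ (a - (j + 1)) * (Qset m n a).card := by
  intro d
  induction d with
  | zero =>
    intro j hj
    have hn : n = j + 1 := by omega
    subst hn
    have hb := Bset_last m (j + 1)
    rw [show j + 1 - 1 = j from rfl] at hb
    rw [hb]
    rw [Finset.Icc_self, Finset.sum_singleton]
    simp
  | succ d ih =>
    intro j hj
    have hlt : j + 1 < n := by omega
    have hsplit := Qset_split m n j hlt
    have hih := ih (j + 1) (by omega)
    have hins : Finset.Icc (j + 1) n = insert (j + 1) (Finset.Icc (j + 2) n) := by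
      ext x
      simp only [Finset.mem_Icc, Finset.mem_insert]
      omega
    rw [hins, Finset.sum_insert (by simp [Finset.mem_Icc])]
    have hshift : ∑ a ∈ Finset.Icc (j + 2) n, (-1 : ℤ) ^ (a - (j + 1)) * (Qset m n a).card
        = - ∑ a ∈ Finset.Icc (j + 2) n, (-1 : ℤ) ^ (a - (j + 2)) * (Qset m n a).card := by
      rw [← Finset.sum_neg_distrib]
      apply Finset.sum_congr rfl
      intro a ha
      rw [Finset.mem_Icc] at ha
      rw [show a - (j + 1) = (a - (j + 2)) + 1 by omega, pow_succ]
      ring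
    rw [hshift, ← hih]
    have : ((Qset m n (j + 1)).card : ℤ) = (Bset m n j).card + (Bset m n (j + 1)).card := by
      exact_mod_cast hsplit
    simp at this ⊢
    linarith [this]

lemma Qset_run (m n a : ℕ) (f : Fin n → Fin m)
    (h2 : ∀ (k : ℕ) (hk : k + 1 < n), k + 1 < a →
      (f ⟨k + 1, hk⟩ : ℕ) = (f ⟨k, Nat.lt_of_succ_lt hk⟩ : ℕ) + 1) :
    ∀ (k : ℕ) (hk : k < a) (hkn : k < n) (h0 : 0 < n),
      (f ⟨k, hkn⟩ : ℕ) = (f ⟨0, h0⟩ : ℕ) + k := by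
  intro k
  induction k with
  | zero => intro hk hkn h0; rfl
  | succ k ih =>
    intro hk hkn h0
    have e1 := h2 k hkn (by omega)
    rw [e1, ih (by omega) (by omega) h0]
    omega

lemma Qset_card (m n a : ℕ) (hm : 2 ≤ m) (ha : 1 ≤ a) (han : a ≤ n) :
    (Qset m n a).card = (m - a) * phiNat m (n - a) := by
  rw [phiNat_eq]
  have h0 : 0 < n := by omega
  have hcard : (Qset m n a).card = ((Finset.Icc 1 (m - a)) ×ˢ (Bset m (n - a) 0)).card := by
    apply Finset.card_nbij'
      (i := fun f => ((f ⟨0, h0⟩ : ℕ),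
        fun j : Fin (n - a) => f ⟨a + (j : ℕ), by have := j.isLt; omega⟩))
      (j := fun p (k : Fin n) =>
        if h : (k : ℕ) < a then
          (⟨(p.1 + (k : ℕ)) % m, Nat.mod_lt _ (by omega)⟩ : Fin m)
        else p.2 ⟨(k : ℕ) - a, by have := k.isLt; omega⟩)
    case hi =>
      intro f hf
      simp only [Finset.mem_coe, Qset, Finset.mem_filter, Finset.mem_univ, true_and] at hf
      obtain ⟨h1, h2, h3⟩ := hf
      have hrun := Qset_run m n a f h2
      simp only [Finset.mem_coe, Finset.mem_product, Finset.mem_Icc, Bset, Finset.mem_filter,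
        Finset.mem_univ, true_and]
      refine ⟨⟨h1 _, ?_⟩, ?_, ?_, ?_⟩
      · -- f 0 ≤ m - a
        have hv := hrun (a - 1) (by omega) (by omega) h0
        have hlt : (f ⟨a - 1, by omega⟩ : ℕ) < m := (f _).isLt
        omega
      · intro k; exact h1 _
      · intro k hk hk0; omega
      · intro j hj hj0
        exact h3 (a + j) (by omega) (by omega)
    case hj =>
      rintro ⟨x, g⟩ hp
      simp only [Finset.mem_coe, Finset.mem_product, Finset.mem_Icc, Bset, Finset.mem_filter,
        Finset.mem_univ, true_and] at hp
      obtain ⟨⟨hx1, hx2⟩, hg1, -, hg3⟩ := hp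
      have ham : a < m := by omega
      simp only [Finset.mem_coe, Qset, Finset.mem_filter, Finset.mem_univ, true_and]
      refine ⟨?_, ?_, ?_⟩
      · intro k
        by_cases h : (k : ℕ) < a
        · simp only [dif_pos h]
          have : (x + (k : ℕ)) % m = x + (k : ℕ) := Nat.mod_eq_of_lt (by omega)
          simp [this]; omega
        · simp only [dif_neg h]
          exact hg1 _
      · intro k hk hka
        have h1 : (k : ℕ) < a := by omega
        have h2 : (k + 1 : ℕ) < a := hka
        simp only [dif_pos h1, dif_pos h2]
        have e1 : (x + (k + 1 : ℕ)) % m = x + (k + 1) := Nat.mod_eq_of_lt (by omega)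
        have e2 : (x + (k : ℕ)) % m = x + k := Nat.mod_eq_of_lt (by omega)
        simp [e1, e2]
        omega
      · intro k hk hka
        have h1 : ¬ ((k : ℕ) < a) := by omega
        have h2 : ¬ ((k + 1 : ℕ) < a) := by omega
        simp only [dif_pos, dif_neg h1, dif_neg h2]
        have hidx : (⟨k + 1 - a, by omega⟩ : Fin (n - a)) = ⟨(k - a) + 1, by omega⟩ := by
          simp only [Fin.mk.injEq]; omega
        rw [hidx]
        exact hg3 (k - a) (by omega) (Nat.zero_le _)
    case left_inv =>
      intro f hf
      simp only [Finset.mem_coe, Qset, Finset.mem_filter, Finset.mem_univ, true_and] at hf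
      obtain ⟨h1, h2, h3⟩ := hf
      have hrun := Qset_run m n a f h2
      funext k
      by_cases h : (k : ℕ) < a
      · simp only [dif_pos h]
        have hv := hrun (k : ℕ) h (by omega) h0
        have hlt : (f k : ℕ) < m := (f k).isLt
        ext
        simp only
        have hk2 : (⟨(k : ℕ), by omega⟩ : Fin n) = k := by ext; rfl
        rw [hk2] at hv
        rw [Nat.mod_eq_of_lt (by omega)]
        omega
      · simp only [dif_neg h]
        congr 1
        ext
        simp only
        omega
    case right_inv =>
      rintro ⟨x, g⟩ hp
      simp only [Finset.mem_coe, Finset.mem_product, Finset.mem_Icc, Bset, Finset.mem_filter,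
        Finset.mem_univ, true_and] at hp
      obtain ⟨⟨hx1, hx2⟩, -, -, -⟩ := hp
      have ham : a < m := by omega
      refine Prod.ext ?_ ?_
      · simp only [dif_pos (show (0 : ℕ) < a from ha)]
        simp [Nat.mod_eq_of_lt (show x < m by omega)]
      · funext j
        have h : ¬ (a + (j : ℕ) < a) := by omega
        simp only [dif_neg h]
        congr 1
        ext
        simp only
        omega
  rw [hcard, Finset.card_product, Nat.card_Icc]
  simp

lemma phiNat_rec (m n : ℕ) (hm : 2 ≤ m) (hn : 1 ≤ n) :
    (phiNat m n : ℤ) = ∑ a ∈ Finset.Icc 1 n,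
      (-1 : ℤ) ^ (a - 1) * ((m - a : ℕ) : ℤ) * (phiNat m (n - a) : ℤ) := by
  rw [phiNat_eq]
  have htele := Bset_tele m n (n - 1) 0 (by omega)
  rw [htele]
  apply Finset.sum_congr rfl
  intro a ha
  rw [Finset.mem_Icc] at ha
  rw [Qset_card m n a hm ha.1 ha.2]
  push_cast
  ring

noncomputable def innerSum (m n r : ℕ) : ℤ :=
  ∑ a ∈ (Fintype.piFinset fun _ : Fin r => Finset.Icc 1 (m - 1)) |>.filter
      (fun a => ∑ i, a i = n),
    ∏ i, ((m : ℤ) - (a i : ℤ))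

noncomputable def Ssum (m n : ℕ) : ℤ :=
  ∑ r ∈ Finset.range (n + 1), (-1 : ℤ) ^ r * innerSum m n r

lemma innerSum_zero (m n : ℕ) : innerSum m n 0 = if n = 0 then 1 else 0 := by
  unfold innerSum
  split_ifs with h
  · subst h
    rw [Finset.filter_true_of_mem (by simp)]
    simp [Fintype.card_piFinset]
  · rw [Finset.filter_false_of_mem (by intro a _; simp; omega), Finset.sum_empty]

lemma innerSum_empty (m n r : ℕ) (h : n < r) : innerSum m n r = 0 := by
  unfold innerSum
  rw [Finset.filter_false_of_mem, Finset.sum_empty]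
  intro a ha
  rw [Fintype.mem_piFinset] at ha
  intro hsum
  have : ∀ i, 1 ≤ a i := fun i => (Finset.mem_Icc.mp (ha i)).1
  have hge : r ≤ ∑ i, a i := by
    calc (r : ℕ) = ∑ _i : Fin r, 1 := by simp
    _ ≤ ∑ i, a i := Finset.sum_le_sum (fun i _ => this i)
  omega

lemma innerSum_succ (m n r : ℕ) :
    innerSum m n (r + 1) = ∑ x ∈ Finset.Icc 1 (m - 1), ((m : ℤ) - (x : ℤ)) *
      ∑ b ∈ (Fintype.piFinset fun _ : Fin r => Finset.Icc 1 (m - 1)) |>.filter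
          (fun b => x + ∑ i, b i = n),
        ∏ i, ((m : ℤ) - (b i : ℤ)) := by
  unfold innerSum
  simp_rw [Finset.mul_sum]
  rw [Finset.sum_sigma']
  apply Finset.sum_nbij' (i := fun a => (⟨a 0, Fin.tail a⟩ : Σ _x : ℕ, (Fin r → ℕ)))
    (j := fun p => Fin.cons p.1 p.2)
  · intro a ha
    simp only [Finset.mem_filter, Fintype.mem_piFinset] at ha
    obtain ⟨h1, h2⟩ := ha
    simp only [Finset.mem_sigma, Finset.mem_filter, Fintype.mem_piFinset]
    refine ⟨h1 0, fun i => h1 i.succ, ?_⟩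
    rw [← h2, Fin.sum_univ_succ]
    rfl
  · rintro ⟨x, b⟩ hp
    simp only [Finset.mem_sigma, Finset.mem_filter, Fintype.mem_piFinset] at hp
    obtain ⟨h1, h2, h3⟩ := hp
    simp only [Finset.mem_filter, Fintype.mem_piFinset]
    constructor
    · intro i
      refine Fin.cases ?_ ?_ i
      · simpa using h1
      · intro j; simpa using h2 j
    · rw [Fin.sum_univ_succ]
      simpa using h3
  · intro a _
    exact Fin.cons_self_tail a
  · rintro ⟨x, b⟩ _
    simp [Fin.tail_cons]
  · intro a _
    rw [Fin.prod_univ_succ]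
    rfl

lemma Ssum_zero (m : ℕ) : Ssum m 0 = 1 := by
  unfold Ssum
  simp [innerSum_zero]

lemma Ssum_rec (m n : ℕ) (hm : 2 ≤ m) (hn : 1 ≤ n) :
    Ssum m n = - ∑ x ∈ Finset.Icc 1 n, ((m - x : ℕ) : ℤ) * Ssum m (n - x) := by
  have hX : ∀ x, 1 ≤ x → x ≤ m - 1 →
      ∑ r ∈ Finset.range n, (-1 : ℤ) ^ r *
        ∑ b ∈ (Fintype.piFinset fun _ : Fin r => Finset.Icc 1 (m - 1)) |>.filter
            (fun b => x + ∑ i, b i = n), ∏ i, ((m : ℤ) - (b i : ℤ))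
      = if x ≤ n then Ssum m (n - x) else 0 := by
    intro x hx1 hx2
    split_ifs with hxn
    · have hfil : ∀ r : ℕ,
          ((Fintype.piFinset fun _ : Fin r => Finset.Icc 1 (m - 1)).filter
            (fun b => x + ∑ i, b i = n)) =
          ((Fintype.piFinset fun _ : Fin r => Finset.Icc 1 (m - 1)).filter
            (fun b => ∑ i, b i = n - x)) := by
        intro r
        apply Finset.filter_congr
        intro b _
        constructor <;> intro h <;> omega
      rw [Finset.sum_congr rfl (fun r _ => by rw [hfil r])]
      unfold Ssum innerSum
      symm
      apply Finset.sum_subset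
      · intro r hr
        simp only [Finset.mem_range] at *
        omega
      · intro r hr1 hr2
        simp only [Finset.mem_range] at hr1 hr2
        have := innerSum_empty m (n - x) r (by omega)
        unfold innerSum at this
        rw [this, mul_zero]
    · apply Finset.sum_eq_zero
      intro r _
      rw [Finset.filter_false_of_mem, Finset.sum_empty, mul_zero]
      intro b _
      intro hc
      omega
  conv_lhs => rw [Ssum]
  rw [Finset.sum_range_succ']
  rw [innerSum_zero]
  rw [if_neg (by omega : ¬ n = 0)]
  rw [mul_zero, add_zero]
  have hstep : ∀ r ∈ Finset.range n, (-1 : ℤ) ^ (r + 1) * innerSum m n (r + 1)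
      = ∑ x ∈ Finset.Icc 1 (m - 1), (-((m : ℤ) - (x : ℤ))) * ((-1 : ℤ) ^ r *
        ∑ b ∈ (Fintype.piFinset fun _ : Fin r => Finset.Icc 1 (m - 1)) |>.filter
            (fun b => x + ∑ i, b i = n), ∏ i, ((m : ℤ) - (b i : ℤ))) := by
    intro r _
    rw [innerSum_succ, Finset.mul_sum]
    apply Finset.sum_congr rfl
    intro x _
    rw [pow_succ]
    ring
  rw [Finset.sum_congr rfl hstep]
  rw [Finset.sum_comm]
  have hcol : ∀ x ∈ Finset.Icc 1 (m - 1),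
      (∑ r ∈ Finset.range n, (-((m : ℤ) - (x : ℤ))) * ((-1 : ℤ) ^ r *
        ∑ b ∈ (Fintype.piFinset fun _ : Fin r => Finset.Icc 1 (m - 1)) |>.filter
            (fun b => x + ∑ i, b i = n), ∏ i, ((m : ℤ) - (b i : ℤ))))
      = (fun x => if x ≤ n then -(((m - x : ℕ) : ℤ) * Ssum m (n - x)) else 0) x := by
    intro x hx
    rw [Finset.mem_Icc] at hx
    rw [← Finset.mul_sum, hX x hx.1 hx.2]
    show _ = if x ≤ n then -(((m - x : ℕ) : ℤ) * Ssum m (n - x)) else 0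
    split_ifs with hxn
    · have : ((m - x : ℕ) : ℤ) = (m : ℤ) - (x : ℤ) := by
        have : x ≤ m := by omega
        push_cast [Nat.cast_sub this]
        ring
      rw [this]
      ring
    · ring
  rw [Finset.sum_congr rfl hcol]
  have hbig1 : ∑ x ∈ Finset.Icc 1 (m - 1),
      (fun x => if x ≤ n then -(((m - x : ℕ) : ℤ) * Ssum m (n - x)) else 0) x
      = ∑ x ∈ Finset.Icc 1 (n + m),
      (fun x => if x ≤ n then -(((m - x : ℕ) : ℤ) * Ssum m (n - x)) else 0) x := by
    apply Finset.sum_subset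
    · intro x hx
      simp only [Finset.mem_Icc] at *
      omega
    · intro x hx1 hx2
      simp only [Finset.mem_Icc] at hx1 hx2
      have hxm : m ≤ x := by omega
      show (if x ≤ n then -(((m - x : ℕ) : ℤ) * Ssum m (n - x)) else 0) = 0
      split_ifs with hxn
      · rw [show m - x = 0 by omega]
        simp
      · rfl
  rw [hbig1]
  calc ∑ x ∈ Finset.Icc 1 (n + m),
      (fun x => if x ≤ n then -(((m - x : ℕ) : ℤ) * Ssum m (n - x)) else 0) x
      = ∑ x ∈ Finset.Icc 1 n,
      (fun x => if x ≤ n then -(((m - x : ℕ) : ℤ) * Ssum m (n - x)) else 0) x := by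
        symm
        apply Finset.sum_subset
        · intro x hx
          simp only [Finset.mem_Icc] at *
          omega
        · intro x hx1 hx2
          simp only [Finset.mem_Icc] at hx1 hx2
          show (if x ≤ n then -(((m - x : ℕ) : ℤ) * Ssum m (n - x)) else 0) = 0
          rw [if_neg (by omega : ¬ x ≤ n)]
    _ = ∑ x ∈ Finset.Icc 1 n, -(((m - x : ℕ) : ℤ) * Ssum m (n - x)) := by
        apply Finset.sum_congr rfl
        intro x hx
        simp only [Finset.mem_Icc] at hx
        show (if x ≤ n then -(((m - x : ℕ) : ℤ) * Ssum m (n - x)) else 0) = _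
        rw [if_pos hx.2]
    _ = - ∑ x ∈ Finset.Icc 1 n, ((m - x : ℕ) : ℤ) * Ssum m (n - x) := by
        rw [← Finset.sum_neg_distrib]

lemma phiNat_zero (m : ℕ) : phiNat m 0 = 1 := by
  rw [phiNat_eq]
  have : Bset m 0 0 = Finset.univ := by
    ext f
    simp [Bset]
  rw [this, Finset.card_univ]
  simp

theorem key (m : ℕ) (hm : 2 ≤ m) : ∀ n : ℕ, (phiNat m n : ℤ) = (-1 : ℤ) ^ n * Ssum m n := by
  intro n
  induction n using Nat.strong_induction_on with
  | _ n ih =>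
    rcases Nat.eq_zero_or_pos n with h0 | h1
    · subst h0
      rw [Ssum_zero, phiNat_zero]
      norm_num
    · rw [phiNat_rec m n hm h1, Ssum_rec m n hm h1]
      rw [mul_neg, Finset.mul_sum, ← Finset.sum_neg_distrib]
      apply Finset.sum_congr rfl
      intro a ha
      rw [Finset.mem_Icc] at ha
      rw [ih (n - a) (by omega)]
      have hsgn : (-1 : ℤ) ^ (a - 1) * (-1 : ℤ) ^ (n - a) = (-1 : ℤ) ^ (n - 1) := by
        rw [← pow_add, show (a - 1) + (n - a) = n - 1 by omega]
      have hn1 : (-1 : ℤ) ^ n = -(-1 : ℤ) ^ (n - 1) := by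
        conv_lhs => rw [show n = (n - 1) + 1 by omega]
        rw [pow_succ]
        ring
      calc (-1 : ℤ) ^ (a - 1) * ((m - a : ℕ) : ℤ) * ((-1 : ℤ) ^ (n - a) * Ssum m (n - a))
          = ((-1 : ℤ) ^ (a - 1) * (-1 : ℤ) ^ (n - a)) * (((m - a : ℕ) : ℤ) * Ssum m (n - a)) := by
            ring
        _ = (-1 : ℤ) ^ (n - 1) * (((m - a : ℕ) : ℤ) * Ssum m (n - a)) := by rw [hsgn]
        _ = -((-1 : ℤ) ^ n * (((m - a : ℕ) : ℤ) * Ssum m (n - a))) := by rw [hn1]; ring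

/-- **Proposition (Itagaki–Nakamoto–Torii).**
For `n ≥ 0`,
`φ(n) = (-1)ⁿ ∑_{r ≥ 0} (-1)^r ∑_{(a₁,…,a_r)} (m-a₁)⋯(m-a_r)`,
the inner sum being over `r`-tuples of integers `1 ≤ aᵢ ≤ m-1` with `a₁ + ⋯ + a_r = n`
(only `r ≤ n` contributes). -/
theorem stmt_5 (m : ℕ) (hm : 2 ≤ m) (n : ℕ) :
    phi m (n : ℤ) =
      (-1 : ℤ) ^ n * ∑ r ∈ Finset.range (n + 1), (-1 : ℤ) ^ r *
        ∑ a ∈ (Fintype.piFinset fun _ : Fin r => Finset.Icc 1 (m - 1)) |>.filter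
            (fun a => ∑ i, a i = n),
          ∏ i, ((m : ℤ) - (a i : ℤ)) := by
  have h1 : phi m (n : ℤ) = (phiNat m n : ℤ) := by
    rw [phi, if_neg (by omega : ¬ (n : ℤ) < 0)]
    simp
  rw [h1]
  exact key m hm n
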